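/- If α̂₁₁ minimizes the penalized weighted-likelihood objective F₁₁ over ℝ^{1+q₂}, then: (i) the weighted product residuals vanish, (1/n)·Σ_{i=1}^n Z_i·((1−π̂_i)/π̂_i)·(D_i·Y_i − m̂_i·m̂₁₁,_i) = 0; (ii) consequently the augmented inverse-probability-weighted average simplifies, (1/n)·Σ_{i=1}^n [ m̂_i·m̂₁₁,_i + (Z_i/π̂_i)·(D_i·Y_i − m̂_i·m̂₁₁,_i) ] = (1/n)·Σ_{i=1}^n [ Z_i·D_i·Y_i + (1−Z_i)·m̂_i·m̂₁₁,_i ]; and (iii) this common value lies between min_i c_i and max_i c_i, where c_i = D_i·Y_i if Z_i = 1 and c_i = m̂_i·m̂₁₁,_i if Z_i = 0. -/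

import Mathlib

open Finset

/-- KKT consequences of minimizing the penalized weighted-likelihood objective for
the outcome regression: vanishing weighted product residuals, simplification of the
augmented IPW average, and boundedness between the extreme values `c_i`. -/
theorem stmt_8 (n q2 : ℕ) (hn : 1 ≤ n) (hq2 : 1 ≤ q2)
    (Z D Y : Fin n → ℝ) (hZ : ∀ i, Z i = 0 ∨ Z i = 1)
    (πhat : Fin n → ℝ) (hπ : ∀ i, 0 < πhat i ∧ πhat i < 1)
    (mhat : Fin n → ℝ)
    (h : Fin n → Fin (q2 + 1) → ℝ) (hh0 : ∀ i, h i 0 = 1)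
    (Ψ ψ : ℝ → ℝ) (hΨ : ∀ x, HasDerivAt Ψ (ψ x) x)
    (lam : ℝ) (hlam : 0 ≤ lam)
    (w : Fin n → ℝ) (hw : ∀ i, w i = (1 - πhat i) / πhat i)
    (F : (Fin (q2 + 1) → ℝ) → ℝ)
    (hF : ∀ α, F α = (1 / (n : ℝ)) * ∑ i, Z i * w i *
          (-(D i * Y i) * (∑ j, α j * h i j) + mhat i * Ψ (∑ j, α j * h i j))
        + lam * ∑ j : Fin q2, |α j.succ|)
    (αhat : Fin (q2 + 1) → ℝ) (hmin : ∀ α, F αhat ≤ F α)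
    (m11 : Fin n → ℝ) (hm11 : ∀ i, m11 i = ψ (∑ j, αhat j * h i j))
    (c : Fin n → ℝ)
    (hc : ∀ i, c i = if Z i = 1 then D i * Y i else mhat i * m11 i) :
    ((1 / (n : ℝ)) * ∑ i, Z i * ((1 - πhat i) / πhat i)
        * (D i * Y i - mhat i * m11 i) = 0) ∧
    ((1 / (n : ℝ)) * ∑ i, (mhat i * m11 i
          + (Z i / πhat i) * (D i * Y i - mhat i * m11 i))
        = (1 / (n : ℝ)) * ∑ i, (Z i * (D i * Y i) + (1 - Z i) * (mhat i * m11 i))) ∧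
    ((⨅ i, c i) ≤ (1 / (n : ℝ)) * ∑ i, (Z i * (D i * Y i) + (1 - Z i) * (mhat i * m11 i)) ∧
      (1 / (n : ℝ)) * ∑ i, (Z i * (D i * Y i) + (1 - Z i) * (mhat i * m11 i)) ≤ ⨆ i, c i) := by
  set s : Fin n → ℝ := fun i => ∑ j, αhat j * h i j with hs
  -- the one-dimensional function obtained by moving along the intercept direction
  set g : ℝ → ℝ := fun t => (1 / (n : ℝ)) * ∑ i, Z i * w i *
      (-(D i * Y i) * (s i + t) + mhat i * Ψ (s i + t)) with hg
  have hFt : ∀ t : ℝ,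
      F (fun j => αhat j + t * (if j = 0 then 1 else 0))
        = g t + lam * ∑ j : Fin q2, |αhat j.succ| := by
    intro t
    rw [hF, hg]
    congr 1
    · congr 1
      apply Finset.sum_congr rfl
      intro i _
      have hsum : ∑ j, (αhat j + t * (if j = 0 then 1 else 0)) * h i j = s i + t := by
        rw [hs]
        simp only [add_mul, Finset.sum_add_distrib]
        congr 1
        simp [ite_mul, mul_ite, Finset.sum_ite_eq', hh0 i]
      rw [hsum]
    · congr 1
      apply Finset.sum_congr rfl
      intro j _
      simp [Fin.succ_ne_zero]
  have hgmin : ∀ t, g 0 ≤ g t := by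
    intro t
    have h0 : g 0 + lam * ∑ j : Fin q2, |αhat j.succ| = F αhat := by
      rw [← hFt 0]
      congr 1
      funext j
      simp
    have h1 := hmin (fun j => αhat j + t * (if j = 0 then 1 else 0))
    rw [hFt t, ← h0] at h1
    linarith
  have hloc : IsLocalMin g 0 := Filter.Eventually.of_forall hgmin
  have hderiv : HasDerivAt g ((1 / (n : ℝ)) * ∑ i, Z i * w i *
      (-(D i * Y i) * 1 + mhat i * (ψ (s i + 0) * 1))) 0 := by
    have hsum : HasDerivAt (fun t => ∑ i, Z i * w i *
        (-(D i * Y i) * (s i + t) + mhat i * Ψ (s i + t)))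
        (∑ i, Z i * w i * (-(D i * Y i) * 1 + mhat i * (ψ (s i + 0) * 1))) 0 := by
      apply HasDerivAt.fun_sum
      intro i _
      have hinner : HasDerivAt (fun t : ℝ => s i + t) 1 0 := by
        simpa using (hasDerivAt_id (0 : ℝ)).const_add (s i)
      have hA : HasDerivAt (fun t : ℝ => -(D i * Y i) * (s i + t)) (-(D i * Y i) * 1) 0 :=
        hinner.const_mul _
      have hB : HasDerivAt (fun t : ℝ => Ψ (s i + t)) (ψ (s i + 0) * 1) 0 :=
        (hΨ (s i + 0)).comp 0 hinner
      exact (hA.add (hB.const_mul (mhat i))).const_mul _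
    simpa [hg] using hsum.const_mul (1 / (n : ℝ))
  have hzero : (1 / (n : ℝ)) * ∑ i, Z i * w i *
      (-(D i * Y i) * 1 + mhat i * (ψ (s i + 0) * 1)) = 0 :=
    hloc.hasDerivAt_eq_zero hderiv
  have key : (1 / (n : ℝ)) * ∑ i, Z i * ((1 - πhat i) / πhat i)
      * (D i * Y i - mhat i * m11 i) = 0 := by
    have hEq : (1 / (n : ℝ)) * ∑ i, Z i * ((1 - πhat i) / πhat i)
        * (D i * Y i - mhat i * m11 i)
        = -((1 / (n : ℝ)) * ∑ i, Z i * w i *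
          (-(D i * Y i) * 1 + mhat i * (ψ (s i + 0) * 1))) := by
      rw [← mul_neg, ← Finset.sum_neg_distrib]
      congr 1
      apply Finset.sum_congr rfl
      intro i _
      rw [hw i, hm11 i]
      simp only [hs, add_zero]
      ring
    rw [hEq, hzero, neg_zero]
  refine ⟨key, ?_, ?_⟩
  · -- part (ii)
    have hdiff : ∀ i, mhat i * m11 i + (Z i / πhat i) * (D i * Y i - mhat i * m11 i)
        = (Z i * (D i * Y i) + (1 - Z i) * (mhat i * m11 i))
          + Z i * ((1 - πhat i) / πhat i) * (D i * Y i - mhat i * m11 i) := by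
      intro i
      have hπi : πhat i ≠ 0 := (hπ i).1.ne'
      field_simp
      ring
    calc (1 / (n : ℝ)) * ∑ i, (mhat i * m11 i
            + (Z i / πhat i) * (D i * Y i - mhat i * m11 i))
        = (1 / (n : ℝ)) * (∑ i, (Z i * (D i * Y i) + (1 - Z i) * (mhat i * m11 i))
            + ∑ i, Z i * ((1 - πhat i) / πhat i) * (D i * Y i - mhat i * m11 i)) := by
          rw [← Finset.sum_add_distrib]
          congr 1
          exact Finset.sum_congr rfl fun i _ => hdiff i
      _ = (1 / (n : ℝ)) * ∑ i, (Z i * (D i * Y i) + (1 - Z i) * (mhat i * m11 i))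
            + (1 / (n : ℝ)) * ∑ i, Z i * ((1 - πhat i) / πhat i)
              * (D i * Y i - mhat i * m11 i) := by ring
      _ = (1 / (n : ℝ)) * ∑ i, (Z i * (D i * Y i) + (1 - Z i) * (mhat i * m11 i)) := by
          rw [key, add_zero]
  · -- part (iii)
    haveI : Nonempty (Fin n) := Fin.pos_iff_nonempty.mp (by omega)
    have hterm : ∀ i, Z i * (D i * Y i) + (1 - Z i) * (mhat i * m11 i) = c i := by
      intro i
      rcases hZ i with h0 | h1
      · rw [hc i]
        have : ¬ (Z i = 1) := by rw [h0]; norm_num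
        simp [h0, this]
      · rw [hc i]
        simp [h1]
    have hsumc : ∑ i, (Z i * (D i * Y i) + (1 - Z i) * (mhat i * m11 i)) = ∑ i, c i :=
      Finset.sum_congr rfl fun i _ => hterm i
    have hnpos : (0 : ℝ) < n := by exact_mod_cast Nat.lt_of_lt_of_le Nat.zero_lt_one hn
    have hinf : ∀ i, (⨅ i, c i) ≤ c i :=
      fun i => ciInf_le (Set.Finite.bddBelow (Set.finite_range c)) i
    have hsup : ∀ i, c i ≤ ⨆ i, c i :=
      fun i => le_ciSup (Set.Finite.bddAbove (Set.finite_range c)) i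
    have hlow : (n : ℝ) * (⨅ i, c i) ≤ ∑ i, c i := by
      calc (n : ℝ) * (⨅ i, c i) = ∑ _i : Fin n, (⨅ i, c i) := by
            simp [Finset.sum_const, Finset.card_univ, mul_comm]
        _ ≤ ∑ i, c i := Finset.sum_le_sum fun i _ => hinf i
    have hhigh : ∑ i, c i ≤ (n : ℝ) * (⨆ i, c i) := by
      calc ∑ i, c i ≤ ∑ _i : Fin n, (⨆ i, c i) := Finset.sum_le_sum fun i _ => hsup i
        _ = (n : ℝ) * (⨆ i, c i) := by
            simp [Finset.sum_const, Finset.card_univ, mul_comm]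
    constructor
    · rw [hsumc, one_div, inv_mul_eq_div, le_div_iff₀ hnpos]
      linarith
    · rw [hsumc, one_div, inv_mul_eq_div, div_le_iff₀ hnpos]
      linarith
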